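/- arXiv:2506.12578 — 2 statements merged into one kernel-verified Lean document; each statement's English description precedes it below -/
import Mathlib

section
/- The operator S on ℓ^∞ defined by (S x)_1 = 0 and (S x)_n = Σ_{k=1}^{n-1} x_k / 2^k for n ≥ 2 is a positive Levi operator lying in the norm closure of the positive finite rank operators on ℓ^∞. -/
/-- Order convergence of a net. -/
def OConvNet {ι F : Type*} [Preorder ι] [Lattice F] [AddCommGroup F]
    (x : ι → F) (x₀ : F) : Prop :=
  ∃ D : Set F, D.Nonempty ∧ DirectedOn (· ≥ ·) D ∧ IsGLB D 0 ∧
    ∀ y ∈ D, ∃ α₀, ∀ α, α₀ ≤ α → |x α - x₀| ≤ y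

/-- Order convergence of a sequence. -/
def OConvSeq {F : Type*} [Lattice F] [AddCommGroup F] (x : ℕ → F) (x₀ : F) : Prop :=
  ∃ y : ℕ → F, Antitone y ∧ IsGLB (Set.range y) 0 ∧
    ∀ m, ∃ n₀, ∀ n, n₀ ≤ n → |x n - x₀| ≤ y m

/-- A net is order-Cauchy if its double net of differences order converges to `0`. -/
def OCauchyNet {ι F : Type*} [Preorder ι] [Lattice F] [AddCommGroup F]
    (x : ι → F) : Prop :=
  OConvNet (fun p : ι × ι => x p.1 - x p.2) (0 : F)

/-- A sequence is order-Cauchy if its double sequence of differences order converges to `0`. -/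
def OCauchySeq' {F : Type*} [Lattice F] [AddCommGroup F] (x : ℕ → F) : Prop :=
  OConvNet (fun p : ℕ × ℕ => x p.1 - x p.2) (0 : F)

section Maps
variable {E F : Type*} [Lattice E] [AddCommGroup E] [Norm E] [Lattice F] [AddCommGroup F]

def IsLeviMap (T : E → F) : Prop :=
  ∀ (ι : Type) [Nonempty ι] [Preorder ι] [IsDirected ι (· ≤ ·)],
    ∀ x : ι → E, Monotone x → (∃ C, ∀ α, ‖x α‖ ≤ C) →
      ∃ x₀ : E, OConvNet (fun α => T (x α)) (T x₀)

def IsSigmaLeviMap (T : E → F) : Prop :=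
  ∀ x : ℕ → E, Monotone x → (∃ C, ∀ n, ‖x n‖ ≤ C) →
    ∃ x₀ : E, OConvSeq (fun n => T (x n)) (T x₀)

def IsCqLeviMap (T : E → F) : Prop :=
  ∀ (ι : Type) [Nonempty ι] [Preorder ι] [IsDirected ι (· ≤ ·)],
    ∀ x : ι → E, Monotone x → (∃ C, ∀ α, ‖x α‖ ≤ C) →
      ∃ y₀ : F, OConvNet (fun α => T (x α)) y₀

def IsCqSigmaLeviMap (T : E → F) : Prop :=
  ∀ x : ℕ → E, Monotone x → (∃ C, ∀ n, ‖x n‖ ≤ C) →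
    ∃ y₀ : F, OConvSeq (fun n => T (x n)) y₀

def IsQLeviMap (T : E → F) : Prop :=
  ∀ (ι : Type) [Nonempty ι] [Preorder ι] [IsDirected ι (· ≤ ·)],
    ∀ x : ι → E, Monotone x → (∃ C, ∀ α, ‖x α‖ ≤ C) →
      OCauchyNet (fun α => T (x α))

def IsQSigmaLeviMap (T : E → F) : Prop :=
  ∀ x : ℕ → E, Monotone x → (∃ C, ∀ n, ‖x n‖ ≤ C) →
    OCauchySeq' (fun n => T (x n))

end Maps

open Filter Topology

/-- The subspace `c` of convergent real sequences. -/
def cSub : Submodule ℝ (ℕ → ℝ) where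
  carrier := {x | ∃ l : ℝ, Tendsto x atTop (nhds l)}
  add_mem' := by rintro x y ⟨l, hl⟩ ⟨m, hm⟩; exact ⟨l + m, hl.add hm⟩
  zero_mem' := ⟨0, tendsto_const_nhds⟩
  smul_mem' := by rintro c x ⟨l, hl⟩; exact ⟨c * l, hl.const_mul c⟩

/-- The subspace `c₀` of real null sequences. -/
def c0Sub : Submodule ℝ (ℕ → ℝ) where
  carrier := {x | Tendsto x atTop (nhds 0)}
  add_mem' := by intro x y hx hy; have := hx.add hy; rw [add_zero] at this; exact this
  zero_mem' := tendsto_const_nhds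
  smul_mem' := by intro c x hx; have := hx.const_mul c; rw [mul_zero] at this; exact this

/-- The subspace `ℓ^∞` of bounded real sequences. -/
def LinfSub : Submodule ℝ (ℕ → ℝ) where
  carrier := {x | ∃ C : ℝ, ∀ n, |x n| ≤ C}
  add_mem' := by
    rintro x y ⟨C, hC⟩ ⟨D, hD⟩
    exact ⟨C + D, fun n => (abs_add_le _ _).trans (add_le_add (hC n) (hD n))⟩
  zero_mem' := ⟨0, fun n => by simp⟩
  smul_mem' := by
    rintro c x ⟨C, hC⟩
    exact ⟨|c| * C, fun n => by
      simpa [abs_mul] using mul_le_mul_of_nonneg_left (hC n) (abs_nonneg c)⟩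

instance : Lattice cSub :=
  { (inferInstance : PartialOrder cSub) with
    sup := fun x y => ⟨x.1 ⊔ y.1, by
      obtain ⟨l, hl⟩ := x.2; obtain ⟨m, hm⟩ := y.2; exact ⟨l ⊔ m, hl.max hm⟩⟩
    inf := fun x y => ⟨x.1 ⊓ y.1, by
      obtain ⟨l, hl⟩ := x.2; obtain ⟨m, hm⟩ := y.2; exact ⟨l ⊓ m, hl.min hm⟩⟩
    le_sup_left := fun a b => (le_sup_left : a.1 ≤ a.1 ⊔ b.1)
    le_sup_right := fun a b => (le_sup_right : b.1 ≤ a.1 ⊔ b.1)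
    sup_le := fun a b c h₁ h₂ => (sup_le h₁ h₂ : a.1 ⊔ b.1 ≤ c.1)
    inf_le_left := fun a b => (inf_le_left : a.1 ⊓ b.1 ≤ a.1)
    inf_le_right := fun a b => (inf_le_right : a.1 ⊓ b.1 ≤ b.1)
    le_inf := fun a b c h₁ h₂ => (le_inf h₁ h₂ : a.1 ≤ b.1 ⊓ c.1) }

instance : Lattice c0Sub :=
  { (inferInstance : PartialOrder c0Sub) with
    sup := fun x y => ⟨x.1 ⊔ y.1, by
      have := x.2.max y.2; rw [max_self] at this; exact this⟩
    inf := fun x y => ⟨x.1 ⊓ y.1, by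
      have := x.2.min y.2; rw [min_self] at this; exact this⟩
    le_sup_left := fun a b => (le_sup_left : a.1 ≤ a.1 ⊔ b.1)
    le_sup_right := fun a b => (le_sup_right : b.1 ≤ a.1 ⊔ b.1)
    sup_le := fun a b c h₁ h₂ => (sup_le h₁ h₂ : a.1 ⊔ b.1 ≤ c.1)
    inf_le_left := fun a b => (inf_le_left : a.1 ⊓ b.1 ≤ a.1)
    inf_le_right := fun a b => (inf_le_right : a.1 ⊓ b.1 ≤ b.1)
    le_inf := fun a b c h₁ h₂ => (le_inf h₁ h₂ : a.1 ≤ b.1 ⊓ c.1) }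

instance : Lattice LinfSub :=
  { (inferInstance : PartialOrder LinfSub) with
    sup := fun x y => ⟨x.1 ⊔ y.1, by
      obtain ⟨C, hC⟩ := x.2; obtain ⟨D, hD⟩ := y.2
      exact ⟨C ⊔ D, fun n => by
        have h1 := hC n; have h2 := hD n
        simp only [Pi.sup_apply]
        rcases le_total (x.1 n) (y.1 n) with h | h
        · rw [sup_eq_right.2 h]; exact h2.trans le_sup_right
        · rw [sup_eq_left.2 h]; exact h1.trans le_sup_left⟩⟩
    inf := fun x y => ⟨x.1 ⊓ y.1, by
      obtain ⟨C, hC⟩ := x.2; obtain ⟨D, hD⟩ := y.2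
      exact ⟨C ⊔ D, fun n => by
        have h1 := hC n; have h2 := hD n
        simp only [Pi.inf_apply]
        rcases le_total (x.1 n) (y.1 n) with h | h
        · rw [inf_eq_left.2 h]; exact h1.trans le_sup_left
        · rw [inf_eq_right.2 h]; exact h2.trans le_sup_right⟩⟩
    le_sup_left := fun a b => (le_sup_left : a.1 ≤ a.1 ⊔ b.1)
    le_sup_right := fun a b => (le_sup_right : b.1 ≤ a.1 ⊔ b.1)
    sup_le := fun a b c h₁ h₂ => (sup_le h₁ h₂ : a.1 ⊔ b.1 ≤ c.1)
    inf_le_left := fun a b => (inf_le_left : a.1 ⊓ b.1 ≤ a.1)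
    inf_le_right := fun a b => (inf_le_right : a.1 ⊓ b.1 ≤ b.1)
    le_inf := fun a b c h₁ h₂ => (le_inf h₁ h₂ : a.1 ≤ b.1 ⊓ c.1) }

noncomputable instance : Norm cSub := ⟨fun x => ⨆ n, |x.1 n|⟩
noncomputable instance : Norm c0Sub := ⟨fun x => ⨆ n, |x.1 n|⟩
noncomputable instance : Norm LinfSub := ⟨fun x => ⨆ n, |x.1 n|⟩

namespace SLeviAux

lemma le_iff (a b : LinfSub) : a ≤ b ↔ ∀ n, a.1 n ≤ b.1 n := Iff.rfl

lemma abs_coe (a : LinfSub) (n : ℕ) : (|a|).1 n = |a.1 n| := rfl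

lemma bddAbove_abs (x : LinfSub) : BddAbove (Set.range fun n => |x.1 n|) := by
  obtain ⟨C, hC⟩ := x.2
  exact ⟨C, by rintro _ ⟨n, rfl⟩; exact hC n⟩

lemma abs_le_norm (x : LinfSub) (n : ℕ) : |x.1 n| ≤ ‖x‖ :=
  le_ciSup (bddAbove_abs x) n

lemma norm_nonneg' (x : LinfSub) : 0 ≤ ‖x‖ :=
  (abs_nonneg _).trans (abs_le_norm x 0)

lemma norm_le' (x : LinfSub) (C : ℝ) (h : ∀ n, |x.1 n| ≤ C) : ‖x‖ ≤ C :=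
  ciSup_le h

lemma geom_sum_range (m : ℕ) :
    ∑ k ∈ Finset.range m, ((1:ℝ)/2)^(k+1) = 1 - (1/2)^m := by
  induction m with
  | zero => simp
  | succ n ih => rw [Finset.sum_range_succ, ih]; ring

lemma geom_sum_Ico {N m : ℕ} (h : N ≤ m) :
    ∑ k ∈ Finset.Ico N m, ((1:ℝ)/2)^(k+1) = (1/2)^N - (1/2)^m := by
  rw [Finset.sum_Ico_eq_sub _ h, geom_sum_range, geom_sum_range]; ring

end SLeviAux
open SLeviAux in
private theorem part2 (S : LinfSub → LinfSub)
    (hS : ∀ (x : LinfSub) (m : ℕ),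
      (S x).1 m = ∑ k ∈ Finset.range m, x.1 k / 2 ^ (k + 1)) :
    IsLeviMap S := by
  intro ι _ _ _ x hmono hbdd
  obtain ⟨C, hC⟩ := hbdd
  have hCb : ∀ (α : ι) (n : ℕ), |(x α).1 n| ≤ C := fun α n => (abs_le_norm _ n).trans (hC α)
  have hC0 : 0 ≤ C := (abs_nonneg _).trans (hCb (Classical.arbitrary ι) 0)
  have hbn : ∀ n, BddAbove (Set.range fun α => (x α).1 n) := fun n =>
    ⟨C, by rintro _ ⟨α, rfl⟩; exact (abs_le.1 (hCb α n)).2⟩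
  set x₀ : LinfSub := ⟨fun n => ⨆ α, (x α).1 n, ⟨C, fun n => by
    refine abs_le.2 ⟨?_, ciSup_le fun α => (abs_le.1 (hCb α n)).2⟩
    exact le_trans (abs_le.1 (hCb (Classical.arbitrary ι) n)).1
      (le_ciSup (hbn n) (Classical.arbitrary ι))⟩⟩ with hx₀
  have hle : ∀ (α : ι) (n : ℕ), (x α).1 n ≤ x₀.1 n := fun α n => le_ciSup (hbn n) α
  -- the dominating set
  set cst : ∀ δ : ℝ, LinfSub := fun δ => ⟨fun _ => δ, ⟨|δ|, fun _ => le_rfl⟩⟩ with hcst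
  set D : Set LinfSub := {y | ∃ δ : ℝ, 0 < δ ∧ y = cst δ} with hD
  refine ⟨x₀, D, ⟨cst 1, 1, one_pos, rfl⟩, ?_, ?_, ?_⟩
  · rintro _ ⟨δ₁, hδ₁, rfl⟩ _ ⟨δ₂, hδ₂, rfl⟩
    exact ⟨cst (min δ₁ δ₂), ⟨min δ₁ δ₂, lt_min hδ₁ hδ₂, rfl⟩,
      fun n => min_le_left _ _, fun n => min_le_right _ _⟩
  · constructor
    · rintro _ ⟨δ, hδ, rfl⟩
      exact fun n => hδ.le
    · intro b hb
      intro n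
      show b.1 n ≤ 0
      have : ∀ δ : ℝ, 0 < δ → b.1 n ≤ 0 + δ := by
        intro δ hδ
        simpa using hb ⟨δ, hδ, rfl⟩ n
      exact le_of_forall_pos_le_add this
  · rintro _ ⟨δ, hδ, rfl⟩
    -- choose N with (2*C+1) * (1/2)^N < δ/2
    obtain ⟨N, hN⟩ := exists_pow_lt_of_lt_one
      (show (0:ℝ) < δ/(2*(2*C+1)) by positivity) (by norm_num : (1:ℝ)/2 < 1)
    have hNle : 2*C * ((1:ℝ)/2)^N ≤ δ/2 := by
      have h1 : (0:ℝ) < (2*C+1) := by linarith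
      have h2 : (0:ℝ) ≤ ((1:ℝ)/2)^N := by positivity
      have h3 := (lt_div_iff₀ (by positivity : (0:ℝ) < 2*(2*C+1))).1 hN
      nlinarith
    -- choose good indices for k < N
    have hak : ∀ k : ℕ, ∃ β : ι, x₀.1 k - δ/2 < (x β).1 k := by
      intro k
      refine exists_lt_of_lt_ciSup ?_
      show x₀.1 k - δ/2 < x₀.1 k
      linarith
    classical
    choose g hg using hak
    obtain ⟨α₀, hα₀⟩ := Finset.exists_le ((Finset.range N).image g)
    refine ⟨α₀, fun α hα => ?_⟩
    intro m
    show |(S (x α) - S x₀).1 m| ≤ δ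
    have hdiff : (S (x α) - S x₀).1 m
        = -∑ k ∈ Finset.range m, (x₀.1 k - (x α).1 k) / 2 ^ (k+1) := by
      have h1 : (S (x α) - S x₀).1 m = (S (x α)).1 m - (S x₀).1 m := rfl
      rw [h1, hS, hS, ← Finset.sum_sub_distrib, ← Finset.sum_neg_distrib]
      congr 1; ext k; rw [← sub_div, ← neg_div]; ring_nf
    have hterm0 : ∀ k, 0 ≤ (x₀.1 k - (x α).1 k) / 2 ^ (k+1) := fun k =>
      div_nonneg (by linarith [hle α k]) (by positivity)
    rw [hdiff, abs_neg, abs_of_nonneg (Finset.sum_nonneg fun k _ => hterm0 k)]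
    -- two term bounds
    have hb1 : ∀ k < N, (x₀.1 k - (x α).1 k) / 2 ^ (k+1) ≤ (δ/2) * (1/2)^(k+1) := by
      intro k hk
      have hgk : g k ≤ α := le_trans (hα₀ (g k) (Finset.mem_image_of_mem g
        (Finset.mem_range.2 hk))) hα
      have := hmono hgk k
      have h2 := hg k
      rw [one_div_pow, mul_one_div]
      exact div_le_div_of_nonneg_right (by linarith) (by positivity) |>.trans_eq rfl
    have hb2 : ∀ k, (x₀.1 k - (x α).1 k) / 2 ^ (k+1) ≤ (2*C) * (1/2)^(k+1) := by
      intro k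
      rw [one_div_pow, mul_one_div]
      have h1 := (abs_le.1 (hCb α k)).1
      have h2 : x₀.1 k ≤ C := ciSup_le fun β => (abs_le.1 (hCb β k)).2
      exact (div_le_div_iff_of_pos_right (by positivity)).2 (by linarith)
    have hp0 : (0:ℝ) ≤ (1/2:ℝ)^N := by positivity
    have hpm : (0:ℝ) ≤ (1/2:ℝ)^m := by positivity
    rcases le_or_gt m N with hm | hm
    · calc ∑ k ∈ Finset.range m, (x₀.1 k - (x α).1 k) / 2^(k+1)
          ≤ ∑ k ∈ Finset.range m, (δ/2) * (1/2)^(k+1) :=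
            Finset.sum_le_sum fun k hk => hb1 k (lt_of_lt_of_le (Finset.mem_range.1 hk) hm)
        _ = (δ/2) * (1 - (1/2)^m) := by rw [← Finset.mul_sum, geom_sum_range]
        _ ≤ δ := by nlinarith
    · have hsplit : ∑ k ∈ Finset.range m, (x₀.1 k - (x α).1 k) / 2^(k+1)
          = ∑ k ∈ Finset.range N, (x₀.1 k - (x α).1 k) / 2^(k+1)
            + ∑ k ∈ Finset.Ico N m, (x₀.1 k - (x α).1 k) / 2^(k+1) := by
        rw [Finset.range_eq_Ico, Finset.range_eq_Ico]
        exact (Finset.sum_Ico_consecutive (fun k => (x₀.1 k - (x α).1 k) / 2^(k+1)) (Nat.zero_le N) hm.le).symm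
      rw [hsplit]
      have hA : ∑ k ∈ Finset.range N, (x₀.1 k - (x α).1 k) / 2^(k+1)
          ≤ (δ/2) * (1 - (1/2)^N) := by
        calc ∑ k ∈ Finset.range N, (x₀.1 k - (x α).1 k) / 2^(k+1)
            ≤ ∑ k ∈ Finset.range N, (δ/2) * (1/2)^(k+1) :=
              Finset.sum_le_sum fun k hk => hb1 k (Finset.mem_range.1 hk)
          _ = (δ/2) * (1 - (1/2)^N) := by rw [← Finset.mul_sum, geom_sum_range]
      have hB : ∑ k ∈ Finset.Ico N m, (x₀.1 k - (x α).1 k) / 2^(k+1)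
          ≤ (2*C) * ((1/2)^N - (1/2)^m) := by
        calc ∑ k ∈ Finset.Ico N m, (x₀.1 k - (x α).1 k) / 2^(k+1)
            ≤ ∑ k ∈ Finset.Ico N m, (2*C) * (1/2)^(k+1) :=
              Finset.sum_le_sum fun k _ => hb2 k
          _ = (2*C) * ((1/2)^N - (1/2)^m) := by rw [← Finset.mul_sum, geom_sum_Ico hm.le]
      nlinarith
open SLeviAux in
private theorem part3 (S : LinfSub → LinfSub)
    (hS : ∀ (x : LinfSub) (m : ℕ),
      (S x).1 m = ∑ k ∈ Finset.range m, x.1 k / 2 ^ (k + 1)) :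
    (∀ ε : ℝ, 0 < ε → ∃ R : LinfSub →ₗ[ℝ] LinfSub,
      (∃ (n : ℕ) (f : Fin n → (LinfSub →ₗ[ℝ] ℝ)) (v : Fin n → LinfSub),
        ∀ x, R x = ∑ i, f i x • v i) ∧
      (∀ x : LinfSub, 0 ≤ x → 0 ≤ R x) ∧
      (∀ x : LinfSub, ‖S x - R x‖ ≤ ε * ‖x‖)) := by
  intro ε hε
  obtain ⟨N, hN⟩ := exists_pow_lt_of_lt_one hε (by norm_num : (1:ℝ)/2 < 1)
  set f : Fin N → (LinfSub →ₗ[ℝ] ℝ) := fun i =>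
    { toFun := fun x => x.1 i / 2 ^ ((i:ℕ)+1)
      map_add' := fun a b => by simp [add_div]
      map_smul' := fun c a => by simp [mul_div_assoc] } with hf
  set v : Fin N → LinfSub := fun i =>
    ⟨fun m => if (i:ℕ) < m then 1 else 0, ⟨1, fun m => by dsimp; split <;> norm_num⟩⟩ with hv
  set R : LinfSub →ₗ[ℝ] LinfSub := ∑ i, (f i).smulRight (v i) with hRdef
  have hRapp : ∀ x, R x = ∑ i, f i x • v i := fun x => by
    simp [hRdef, LinearMap.sum_apply, LinearMap.smulRight_apply]
  have hRcoe : ∀ (x : LinfSub) (m : ℕ),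
      (R x).1 m = ∑ k ∈ Finset.range N, x.1 k / 2 ^ (k+1) * (if k < m then 1 else 0) := by
    intro x m
    rw [hRapp]
    rw [show ((∑ i, f i x • v i : LinfSub) : ℕ → ℝ) = ∑ i, f i x • (v i).1 by
      push_cast [AddSubmonoidClass.coe_finset_sum]; rfl]
    rw [Finset.sum_apply]
    rw [← Fin.sum_univ_eq_sum_range (fun k => x.1 k / 2 ^ (k+1) * (if k < m then 1 else 0)) N]
    rfl
  refine ⟨R, ⟨N, f, v, hRapp⟩, ?_, ?_⟩
  · intro x hx
    intro m
    rw [show ((0:LinfSub)).1 m = 0 from rfl, hRcoe]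
    refine Finset.sum_nonneg fun k _ => mul_nonneg (div_nonneg (hx k) (by positivity)) ?_
    split <;> norm_num
  · intro x
    refine norm_le' _ _ fun m => ?_
    have hdiff : (S x - R x).1 m = ∑ k ∈ Finset.range m, x.1 k / 2 ^ (k+1)
        - ∑ k ∈ Finset.range (min N m), x.1 k / 2 ^ (k+1) := by
      have h1 : (S x - R x).1 m = (S x).1 m - (R x).1 m := rfl
      rw [h1, hS, hRcoe]
      congr 1
      simp only [mul_ite, mul_one, mul_zero]
      rw [← Finset.sum_filter]
      congr 1
      ext k; simp only [Finset.mem_range, Finset.mem_filter, lt_min_iff]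
    rcases le_or_gt m N with hm | hm
    · rw [hdiff, min_eq_right hm, sub_self, abs_zero]
      exact mul_nonneg hε.le (norm_nonneg' x)
    · rw [hdiff, min_eq_left hm.le, ← Finset.sum_Ico_eq_sub _ hm.le]
      calc |∑ k ∈ Finset.Ico N m, x.1 k / 2 ^ (k+1)|
          ≤ ∑ k ∈ Finset.Ico N m, |x.1 k / 2 ^ (k+1)| := Finset.abs_sum_le_sum_abs _ _
        _ ≤ ∑ k ∈ Finset.Ico N m, ‖x‖ * (1/2) ^ (k+1) := by
            refine Finset.sum_le_sum fun k _ => ?_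
            rw [abs_div, abs_of_pos (by positivity : (0:ℝ) < 2 ^ (k+1)),
              one_div_pow, mul_one_div]
            gcongr
            exact abs_le_norm x k
        _ = ‖x‖ * ((1/2)^N - (1/2)^m) := by rw [← Finset.mul_sum, geom_sum_Ico hm.le]
        _ ≤ ε * ‖x‖ := by
            rw [mul_comm ε]
            have := norm_nonneg' x
            have h2 : (0:ℝ) ≤ (1/2:ℝ)^m := by positivity
            nlinarith [hN]
/-- the operator `S` on `ℓ^∞` given by `(S x)_1 = 0`,
`(S x)_n = ∑_{k=1}^{n-1} x_k / 2^k` for `n ≥ 2` (0-based: `(S x)_m = ∑_{k<m} x_k / 2^(k+1)`)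
is a positive Levi operator lying in the norm closure of the positive finite rank
operators on `ℓ^∞`. -/
theorem S_linf_positive_levi_in_closure_of_finiteRank
    (S : LinfSub → LinfSub)
    (hS : ∀ (x : LinfSub) (m : ℕ),
      (S x).1 m = ∑ k ∈ Finset.range m, x.1 k / 2 ^ (k + 1)) :
    (∀ x : LinfSub, 0 ≤ x → 0 ≤ S x) ∧ IsLeviMap S ∧
    (∀ ε : ℝ, 0 < ε → ∃ R : LinfSub →ₗ[ℝ] LinfSub,
      (∃ (n : ℕ) (f : Fin n → (LinfSub →ₗ[ℝ] ℝ)) (v : Fin n → LinfSub),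
        ∀ x, R x = ∑ i, f i x • v i) ∧
      (∀ x : LinfSub, 0 ≤ x → 0 ≤ R x) ∧
      (∀ x : LinfSub, ‖S x - R x‖ ≤ ε * ‖x‖)) := by
  refine ⟨fun x hx n => ?_, part2 S hS, part3 S hS⟩
  show (0:ℝ) ≤ (S x).1 n
  rw [hS]
  exact Finset.sum_nonneg fun k _ => div_nonneg (hx k) (by positivity)
end

section
/- Neither the set of Levi operators on c nor the set of σ-Levi operators on c is closed in the operator norm: the finite rank operators T_n x = Σ_{k=1}^n (x_k / k) e_k are Levi operators converging in operator norm to the diagonal operator T x = Σ_{k=1}^∞ (x_k / k) e_k, which is not σ-Levi. -/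
open Filter Topology

private lemma cle_def (a b : cSub) : a ≤ b ↔ ∀ k, a.1 k ≤ b.1 k := Iff.rfl

private lemma cabs_apply (a : cSub) (k : ℕ) : (|a|).1 k = |a.1 k| := by
  show a.1 k ⊔ (-a).1 k = _
  rw [abs_eq_max_neg]; rfl

private lemma csub_apply (a b : cSub) (k : ℕ) : (a - b).1 k = a.1 k - b.1 k := rfl

private lemma cnorm_def (a : cSub) : ‖a‖ = ⨆ k, |a.1 k| := rfl

private lemma cbdd (a : cSub) : BddAbove (Set.range fun k => |a.1 k|) := by
  obtain ⟨l, hl⟩ := a.2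
  exact hl.abs.bddAbove_range

private lemma cabs_le_norm (a : cSub) (k : ℕ) : |a.1 k| ≤ ‖a‖ := le_ciSup (cbdd a) k

private lemma cnorm_nonneg (a : cSub) : 0 ≤ ‖a‖ := (abs_nonneg _).trans (cabs_le_norm a 0)

private lemma tend0 (f : ℕ → ℝ) (N : ℕ) (h : ∀ k, N ≤ k → f k = 0) :
    Filter.Tendsto f atTop (nhds 0) := by
  have : Filter.Tendsto (fun _ : ℕ => (0:ℝ)) atTop (nhds 0) := tendsto_const_nhds
  apply this.congr'
  filter_upwards [Filter.eventually_ge_atTop N] with k hk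
  exact (h k hk).symm

private def csingle (k : ℕ) (ε : ℝ) : cSub :=
  ⟨fun j => if j = k then ε else 0, 0, tend0 _ (k+1) (fun j hj => if_neg (by omega))⟩

private lemma glb_small {S : Set cSub} (hS : IsGLB S 0) (k : ℕ) {ε : ℝ} (hε : 0 < ε) :
    ∃ y ∈ S, y.1 k < ε := by
  by_contra hcon
  push_neg at hcon
  have hlow : csingle k ε ∈ lowerBounds S := by
    intro y hy
    rw [cle_def]
    intro j
    by_cases hj : j = k
    · subst hj; simpa [csingle] using hcon y hy
    · have h0 : (0 : cSub).1 j ≤ y.1 j := (cle_def _ _).1 (hS.1 hy) j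
      simpa [csingle, hj] using h0
  have := (cle_def _ _).1 (hS.2 hlow) k
  simp [csingle] at this
  linarith

private lemma oconvseq_coord {w : ℕ → cSub} {w₀ : cSub} (h : OConvSeq w w₀) (k : ℕ) :
    Filter.Tendsto (fun n => (w n).1 k) atTop (nhds (w₀.1 k)) := by
  obtain ⟨y, hanti, hglb, hbound⟩ := h
  rw [Metric.tendsto_atTop]
  intro ε hε
  obtain ⟨z, ⟨m, rfl⟩, hz⟩ := glb_small hglb k (half_pos hε)
  obtain ⟨n₀, hn₀⟩ := hbound m
  refine ⟨n₀, fun n hn => ?_⟩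
  have h1 := (cle_def _ _).1 (hn₀ n hn) k
  rw [cabs_apply, csub_apply] at h1
  rw [Real.dist_eq]
  linarith

private lemma oconvnet_coord {w : ℕ → cSub} {w₀ : cSub} (h : OConvNet w w₀) (k : ℕ) :
    Filter.Tendsto (fun n => (w n).1 k) atTop (nhds (w₀.1 k)) := by
  obtain ⟨D, hne, hdir, hglb, hbound⟩ := h
  rw [Metric.tendsto_atTop]
  intro ε hε
  obtain ⟨z, hzD, hz⟩ := glb_small hglb k (half_pos hε)
  obtain ⟨n₀, hn₀⟩ := hbound z hzD
  refine ⟨n₀, fun n hn => ?_⟩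
  have h1 := (cle_def _ _).1 (hn₀ n hn) k
  rw [cabs_apply, csub_apply] at h1
  rw [Real.dist_eq]
  linarith

/-- The non-convergent 0-1 sequence. -/
private def pseq : ℕ → ℝ := fun k => if Even k then 1 else 0

private def xseq (n : ℕ) : cSub :=
  ⟨fun k => if k < n then pseq k else 0, 0, tend0 _ n (fun j hj => if_neg (by omega))⟩

private lemma pseq_nonneg (k : ℕ) : 0 ≤ pseq k := by unfold pseq; split <;> norm_num

private lemma xseq_mono : Monotone xseq := by
  intro n m hnm
  rw [cle_def]
  intro k
  show (if k < n then pseq k else 0) ≤ (if k < m then pseq k else 0)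
  by_cases hk : k < n
  · rw [if_pos hk, if_pos (lt_of_lt_of_le hk hnm)]
  · rw [if_neg hk]; split
    · exact pseq_nonneg k
    · exact le_refl 0

private lemma xseq_bdd : ∀ n, ‖xseq n‖ ≤ 1 := by
  intro n
  rw [cnorm_def]
  apply ciSup_le
  intro k
  show |if k < n then pseq k else 0| ≤ 1
  unfold pseq
  split
  · split <;> simp
  · simp

/-- Key contradiction: if T x₀ is the coordinatewise limit of T (xseq n), contradiction. -/
private lemma key_contra (T : cSub → cSub)
    (hT : ∀ (a : cSub) (k : ℕ), (T a).1 k = a.1 k / (k + 1)) (x₀ : cSub)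
    (hc : ∀ k, Filter.Tendsto (fun n => (T (xseq n)).1 k) atTop (nhds ((T x₀).1 k))) :
    False := by
  have hx : ∀ k, x₀.1 k = pseq k := by
    intro k
    have hev : Filter.Tendsto (fun n => (T (xseq n)).1 k) atTop (nhds (pseq k / (k+1))) := by
      have : Filter.Tendsto (fun _ : ℕ => pseq k / ((k:ℝ)+1)) atTop (nhds (pseq k / (k+1))) :=
        tendsto_const_nhds
      apply this.congr'
      filter_upwards [Filter.eventually_ge_atTop (k+1)] with n hn
      rw [hT]
      show _ = (if k < n then pseq k else 0) / ((k:ℝ)+1)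
      rw [if_pos (by omega)]
    have := tendsto_nhds_unique (hc k) hev
    rw [hT] at this
    have hk1 : ((k:ℝ)+1) ≠ 0 := by positivity
    field_simp at this
    exact this
  obtain ⟨l, hl⟩ := x₀.2
  have h2 : Filter.Tendsto (fun j : ℕ => 2*j) atTop (Filter.atTop (α := ℕ)) :=
    Filter.tendsto_atTop_atTop.2 fun b => ⟨b, fun a ha => by omega⟩
  have h3 : Filter.Tendsto (fun j : ℕ => 2*j+1) atTop (Filter.atTop (α := ℕ)) :=
    Filter.tendsto_atTop_atTop.2 fun b => ⟨b, fun a ha => by omega⟩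
  have he : Filter.Tendsto (fun j : ℕ => x₀.1 (2*j)) atTop (nhds l) := hl.comp h2
  have ho : Filter.Tendsto (fun j : ℕ => x₀.1 (2*j+1)) atTop (nhds l) := hl.comp h3
  have he1 : (fun j : ℕ => x₀.1 (2*j)) = fun _ => 1 := by
    funext j; rw [hx]; unfold pseq; rw [if_pos ⟨j, by ring⟩]
  have ho1 : (fun j : ℕ => x₀.1 (2*j+1)) = fun _ => 0 := by
    funext j; rw [hx]; unfold pseq; rw [if_neg (by simp [Nat.even_add_one, parity_simps])]
  rw [he1] at he; rw [ho1] at ho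
  have e1 : (1:ℝ) = l := tendsto_nhds_unique tendsto_const_nhds he
  have e0 : (0:ℝ) = l := tendsto_nhds_unique tendsto_const_nhds ho
  linarith

/-- neither Levi nor σ-Levi operators on `c` are closed in the operator
norm: the finite rank operators `Tₙ x = ∑_{k=1}^n (x_k / k) e_k` are Levi and converge
in operator norm to the diagonal operator `T x = ∑_{k=1}^∞ (x_k / k) e_k`, which is not
(σ-)Levi. -/
theorem levi_c_not_norm_closed
    (T : cSub → cSub) (hT : ∀ (a : cSub) (k : ℕ), (T a).1 k = a.1 k / (k + 1))
    (Tn : ℕ → cSub → cSub)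
    (hTn : ∀ (n : ℕ) (a : cSub) (k : ℕ),
      (Tn n a).1 k = if k < n then a.1 k / (k + 1) else 0) :
    (∀ n, IsLeviMap (Tn n)) ∧
    (∀ ε : ℝ, 0 < ε → ∃ N : ℕ, ∀ n ≥ N, ∀ a : cSub, ‖Tn n a - T a‖ ≤ ε * ‖a‖) ∧
    ¬ IsSigmaLeviMap T ∧ ¬ IsLeviMap T := by
  refine ⟨?_, ?_, ?_, ?_⟩
  · -- Each Tn n is Levi
    intro n ι _ _ _ x hmono hbdd
    obtain ⟨C, hC⟩ := hbdd
    have hcoordle : ∀ (α : ι) (k : ℕ), (x α).1 k ≤ C :=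
      fun α k => (le_abs_self _).trans ((cabs_le_norm _ k).trans (hC α))
    have hbddk : ∀ k, BddAbove (Set.range fun α => (x α).1 k) := by
      intro k
      exact ⟨C, by rintro _ ⟨α, rfl⟩; exact hcoordle α k⟩
    set s : ℕ → ℝ := fun k => ⨆ α, (x α).1 k with hs
    have hle_s : ∀ (α : ι) (k : ℕ), (x α).1 k ≤ s k := fun α k => le_ciSup (hbddk k) α
    set x₀ : cSub := ⟨fun k => if k < n then s k else 0, 0,
      tend0 _ n (fun j hj => if_neg (by omega))⟩ with hx₀
    have hk1 : ∀ k : ℕ, (0:ℝ) < (k:ℝ) + 1 := fun k => by positivity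
    -- the difference net
    have hd : ∀ (α : ι) (k : ℕ), (Tn n x₀ - Tn n (x α)).1 k
        = if k < n then (s k - (x α).1 k) / ((k:ℝ)+1) else 0 := by
      intro α k
      rw [csub_apply, hTn, hTn]
      by_cases hk : k < n
      · rw [if_pos hk, if_pos hk, if_pos hk]
        show (if k < n then s k else 0) / _ - _ = _
        rw [if_pos hk, ← sub_div]
      · rw [if_neg hk, if_neg hk, if_neg hk, sub_zero]
    have hdnonneg : ∀ (α : ι) (k : ℕ), 0 ≤ (Tn n x₀ - Tn n (x α)).1 k := by
      intro α k
      rw [hd]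
      split
      · exact div_nonneg (sub_nonneg.2 (hle_s α k)) (hk1 k).le
      · exact le_refl 0
    have hdanti : ∀ {α β : ι}, α ≤ β →
        (Tn n x₀ - Tn n (x β)) ≤ (Tn n x₀ - Tn n (x α)) := by
      intro α β hab
      rw [cle_def]
      intro k
      rw [hd, hd]
      split
      · exact div_le_div_of_nonneg_right (sub_le_sub_left ((cle_def _ _).1 (hmono hab) k) _)
          (hk1 k).le
      · exact le_refl 0
    refine ⟨x₀, Set.range (fun α => Tn n x₀ - Tn n (x α)), Set.range_nonempty _, ?_, ?_, ?_⟩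
    · -- directed downward
      rintro _ ⟨α, rfl⟩ _ ⟨β, rfl⟩
      obtain ⟨γ, hγα, hγβ⟩ := directed_of (· ≤ ·) α β
      exact ⟨_, Set.mem_range_self γ, hdanti hγα, hdanti hγβ⟩
    · -- IsGLB = 0
      constructor
      · rintro _ ⟨α, rfl⟩
        rw [cle_def]
        intro k
        exact hdnonneg α k
      · intro u hu
        rw [cle_def]
        intro k
        have hu' : ∀ α : ι, u.1 k ≤ (Tn n x₀ - Tn n (x α)).1 k :=
          fun α => (cle_def _ _).1 (hu (Set.mem_range_self α)) k
        by_cases hk : k < n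
        · refine le_of_forall_pos_le_add ?_
          intro ε hε
          have hlt : s k - ε * ((k:ℝ)+1) < s k := by nlinarith [hk1 k]
          obtain ⟨α, hα⟩ := exists_lt_of_lt_ciSup
            (show s k - ε*((k:ℝ)+1) < ⨆ α, (x α).1 k from hlt)
          have := hu' α
          rw [hd, if_pos hk] at this
          have h2 : (s k - (x α).1 k) / ((k:ℝ)+1) < ε := by
            rw [div_lt_iff₀ (hk1 k)]
            nlinarith
          show u.1 k ≤ 0 + ε
          linarith
        · have := hu' (Classical.arbitrary ι)
          rw [hd, if_neg hk] at this
          exact this.trans (le_refl 0)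
    · rintro _ ⟨α₀, rfl⟩
      refine ⟨α₀, fun α hα => ?_⟩
      rw [cle_def]
      intro k
      rw [cabs_apply, csub_apply]
      have heq : (Tn n (x α)).1 k - (Tn n x₀).1 k = -((Tn n x₀ - Tn n (x α)).1 k) := by
        rw [csub_apply]; ring
      rw [heq, abs_neg, abs_of_nonneg (hdnonneg α k)]
      exact (cle_def _ _).1 (hdanti hα) k
  · -- operator norm convergence
    intro ε hε
    refine ⟨⌈ε⁻¹⌉₊, fun n hn a => ?_⟩
    rw [cnorm_def]
    apply ciSup_le
    intro k
    rw [csub_apply, hTn, hT]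
    by_cases hk : k < n
    · rw [if_pos hk, sub_self, abs_zero]
      exact mul_nonneg hε.le (cnorm_nonneg a)
    · rw [if_neg hk, zero_sub, abs_neg, abs_div]
      have hk1 : (0:ℝ) < (k:ℝ) + 1 := by positivity
      have h2 : ε⁻¹ ≤ (k:ℝ) + 1 := by
        have h5 : ((⌈ε⁻¹⌉₊:ℕ):ℝ) ≤ (k:ℝ) := Nat.cast_le.2 (by omega)
        linarith [Nat.le_ceil ε⁻¹, h5]
      have h3 : 1 ≤ ε * ((k:ℝ)+1) := by
        have := mul_le_mul_of_nonneg_left h2 hε.le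
        rwa [mul_inv_cancel₀ (ne_of_gt hε)] at this
      rw [abs_of_pos hk1, div_le_iff₀ hk1]
      calc |a.1 k| ≤ ‖a‖ := cabs_le_norm a k
        _ ≤ ‖a‖ * (ε * ((k:ℝ)+1)) := le_mul_of_one_le_right (cnorm_nonneg a) h3
        _ = ε * ‖a‖ * ((k:ℝ)+1) := by ring
  · -- not σ-Levi
    intro h
    obtain ⟨x₀, hc⟩ := h xseq xseq_mono ⟨1, xseq_bdd⟩
    exact key_contra T hT x₀ (fun k => oconvseq_coord hc k)
  · -- not Levi
    intro h
    obtain ⟨x₀, hc⟩ := h ℕ xseq xseq_mono ⟨1, xseq_bdd⟩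
    exact key_contra T hT x₀ (fun k => oconvnet_coord hc k)
end
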